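/- Let ν₁(ρ,δ,γ) = -2[ρ²cos γ - sin γ·(δ + (1 + 1/(1+4δ²))·z)] and ν₂(ρ,δ,γ) = -2z, where z = γ + (1/2)arctan(2δ). Then for (ρ,δ,γ) with ρ > 0, if ν₁(ρ,δ,γ) = 0 and ν₂(ρ,δ,γ) = 0 then ρ = 0, a contradiction; i.e., (ν₁,ν₂) never simultaneously vanishes on {ρ > 0} × ℝ². -/
import Mathlib


noncomputable def z (δ γ : ℝ) : ℝ := γ + (1 / 2) * Real.arctan (2 * δ)

noncomputable def ν₁ (ρ δ γ : ℝ) : ℝ :=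
  -2 * (ρ ^ 2 * Real.cos γ -
    Real.sin γ * (δ + (1 + 1 / (1 + 4 * δ ^ 2)) * z δ γ))

noncomputable def ν₂ (ρ δ γ : ℝ) : ℝ := -2 * z δ γ

theorem LgV_never_vanishes :
    ∀ ρ δ γ : ℝ, 0 < ρ → ¬(ν₁ ρ δ γ = 0 ∧ ν₂ ρ δ γ = 0) := by
  intro ρ δ γ hρ ⟨h1, h2⟩
  have hz : z δ γ = 0 := by
    have := h2; unfold ν₂ at this; linarith
  have hγ : γ = -(1 / 2) * Real.arctan (2 * δ) := by
    unfold z at hz; linarith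
  have habs : |Real.arctan (2 * δ)| < Real.pi / 2 := by
    rw [abs_lt]; exact ⟨Real.neg_pi_div_two_lt_arctan _, Real.arctan_lt_pi_div_two _⟩
  have hcos : 0 < Real.cos γ := by
    apply Real.cos_pos_of_mem_Ioo
    rw [hγ]
    constructor
    · nlinarith [abs_lt.mp habs]
    · nlinarith [abs_lt.mp habs]
  have hsin : Real.sin γ * δ ≤ 0 := by
    rcases le_or_gt δ 0 with hδ | hδ
    · have harct : Real.arctan (2 * δ) ≤ 0 := by
        have := Real.arctan_strictMono.monotone (show 2 * δ ≤ 0 by linarith)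
        simpa using this
      have : 0 ≤ γ := by rw [hγ]; nlinarith
      have : 0 ≤ Real.sin γ := by
        apply Real.sin_nonneg_of_nonneg_of_le_pi this
        have := Real.pi_pos
        rw [hγ]; nlinarith [abs_lt.mp habs]
      nlinarith
    · have harct : 0 ≤ Real.arctan (2 * δ) := by
        have := Real.arctan_strictMono.monotone (show 0 ≤ 2 * δ by linarith)
        simpa using this
      have hγle : γ ≤ 0 := by rw [hγ]; nlinarith
      have : Real.sin γ ≤ 0 := by
        apply Real.sin_nonpos_of_nonpos_of_neg_pi_le hγle
        have := Real.pi_pos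
        rw [hγ]; nlinarith [abs_lt.mp habs]
      nlinarith
  unfold ν₁ at h1
  rw [hz] at h1
  ring_nf at h1
  nlinarith [mul_pos (mul_pos hρ hρ) hcos]
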